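/- Let f : ℝ^d → ℝ be convex and continuously differentiable, let ν be a (σ-finite) measure on ℝ^d, and for m > 0 define F_m := {z ∈ ℝ^d | ∫ exp(−m·D_f(z, x)) dν(x) < ∞}. Then (1) each set F_m is convex, and (2) the sets are increasing: if 0 < m ≤ n then F_m ⊆ F_n. -/

import Mathlib

open MeasureTheory

-- Bregman nonnegativity
lemma bregman_nonneg {d : ℕ} (f : EuclideanSpace ℝ (Fin d) → ℝ)
    (hconv : ConvexOn ℝ Set.univ f) (hf : ContDiff ℝ 1 f)
    (x y : EuclideanSpace ℝ (Fin d)) :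
    (inner ℝ (gradient f y) (x - y) : ℝ) ≤ f x - f y := by
  set g : ℝ → ℝ := fun t => f (y + t • (x - y)) with hg
  have hgconv : ConvexOn ℝ Set.univ g := by
    refine ⟨convex_univ, fun s _ t _ a b ha hb hab => ?_⟩
    have key : y + (a * s + b * t) • (x - y)
        = a • (y + s • (x - y)) + b • (y + t • (x - y)) := by
      rw [smul_add, smul_add, add_add_add_comm, ← add_smul, hab, one_smul,
        smul_smul, smul_smul, ← add_smul]
    simpa [hg, key] using hconv.2 (Set.mem_univ (y + s • (x - y)))
      (Set.mem_univ (y + t • (x - y))) ha hb hab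
  have hdf : HasFDerivAt f (InnerProductSpace.toDual ℝ _ (gradient f y)) y := by
    have := ((hf.differentiable one_ne_zero) y).hasGradientAt
    exact hasGradientAt_iff_hasFDerivAt.mp this
  have hcurve : HasDerivAt (fun t : ℝ => y + t • (x - y)) (x - y) 0 := by
    simpa using ((hasDerivAt_id (0:ℝ)).smul_const (x - y)).const_add y
  have hgderiv : HasDerivAt g (inner ℝ (gradient f y) (x - y) : ℝ) 0 := by
    have hdf' : HasFDerivAt f (InnerProductSpace.toDual ℝ _ (gradient f y)) (y + (0:ℝ) • (x - y)) := by simpa using hdf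
    have h := hdf'.comp_hasDerivAt 0 hcurve
    rw [InnerProductSpace.toDual_apply_apply] at h; exact h
  have := hgconv.le_slope_of_hasDerivAt (Set.mem_univ (0:ℝ)) (Set.mem_univ (1:ℝ))
    zero_lt_one hgderiv
  simpa [slope, hg] using this


/-- Theorem 2 of the paper: for a convex continuously differentiable
function `f : ℝ^d → ℝ` with Bregman divergence `D`, and a σ-finite measure `ν` on `ℝ^d`,
the sets `F m = {z | ∫ exp(-m·D(z,x)) dν(x) < ∞}` are convex and increasing in `m`. -/
theorem finiteness_sets_convex_increasing {d : ℕ}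
    (f : EuclideanSpace ℝ (Fin d) → ℝ)
    (hconv : ConvexOn ℝ Set.univ f) (hf : ContDiff ℝ 1 f)
    (D : EuclideanSpace ℝ (Fin d) → EuclideanSpace ℝ (Fin d) → ℝ)
    (hD : ∀ x y, D x y = f x - f y - (inner ℝ (gradient f y) (x - y) : ℝ))
    (ν : Measure (EuclideanSpace ℝ (Fin d))) [SigmaFinite ν]
    (F : ℝ → Set (EuclideanSpace ℝ (Fin d)))
    (hF : ∀ m, F m = {z | ∫⁻ x, ENNReal.ofReal (Real.exp (-(m * D z x))) ∂ν < ⊤}) :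
    (∀ m : ℝ, 0 < m → Convex ℝ (F m)) ∧
    (∀ m n : ℝ, 0 < m → m ≤ n → F m ⊆ F n) := by
  have hDnn : ∀ z x, 0 ≤ D z x := by
    intro z x
    rw [hD]
    linarith [bregman_nonneg f hconv hf z x]
  -- continuity/measurability of integrand
  have hgradcont : Continuous (gradient f) := by
    have h1 : Continuous (fderiv ℝ f) := hf.continuous_fderiv one_ne_zero
    exact (InnerProductSpace.toDual ℝ _).symm.continuous.comp h1
  have hmeas : ∀ (m : ℝ) (z : EuclideanSpace ℝ (Fin d)),
      Measurable fun x => ENNReal.ofReal (Real.exp (-(m * D z x))) := by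
    intro m z
    have hcont : Continuous fun x => D z x := by
      simp only [hD]
      exact (continuous_const.sub (hf.continuous)).sub
        ((hgradcont.inner (continuous_const.sub continuous_id)))
    exact (ENNReal.measurable_ofReal.comp
      ((Real.continuous_exp.comp (continuous_const.mul hcont).neg).measurable))
  constructor
  · -- convexity
    intro m hm z₁ hz₁ z₂ hz₂ a b ha hb hab
    rcases eq_or_lt_of_le ha with rfl | ha'
    · have hb1 : b = 1 := by linarith
      simpa [hb1] using hz₂
    rcases eq_or_lt_of_le hb with rfl | hb'
    · have ha1 : a = 1 := by linarith
      simpa [ha1] using hz₁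
    rw [hF] at hz₁ hz₂ ⊢
    simp only [Set.mem_setOf_eq] at hz₁ hz₂ ⊢
    set zc := a • z₁ + b • z₂ with hzc
    set c : ℝ := f zc - a * f z₁ - b * f z₂ with hc
    have hDeq : ∀ x, D zc x = a * D z₁ x + b * D z₂ x + c := by
      intro x
      have hinner : (inner ℝ (gradient f x) (zc - x) : ℝ)
          = a * (inner ℝ (gradient f x) (z₁ - x) : ℝ)
            + b * (inner ℝ (gradient f x) (z₂ - x) : ℝ) := by
        have : zc - x = a • (z₁ - x) + b • (z₂ - x) := by
          rw [hzc, smul_sub, smul_sub, sub_add_sub_comm, ← add_smul, hab, one_smul]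
        rw [this, inner_add_right, inner_smul_right, inner_smul_right]
      simp only [hD, hc]
      rw [hinner]
      linear_combination (f x) * hab
    have hpt : ∀ x, Real.exp (-(m * D zc x))
        = Real.exp (-(m * c)) * (Real.exp (-(m * D z₁ x)) ^ a
            * Real.exp (-(m * D z₂ x)) ^ b) := by
      intro x
      rw [hDeq x, show -(m * (a * D z₁ x + b * D z₂ x + c))
          = -(m * c) + (-(m * D z₁ x) * a + -(m * D z₂ x) * b) by ring,
        Real.exp_add, Real.exp_add, Real.exp_mul, Real.exp_mul]
    have hpq : (1 / a : ℝ).HolderConjugate (1 / b) := by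
      rw [Real.holderConjugate_iff]; constructor
      · rw [lt_div_iff₀ ha']; linarith
      · rw [one_div, one_div, inv_inv, inv_inv]; exact hab
    set g₁ : EuclideanSpace ℝ (Fin d) → ENNReal :=
      fun x => ENNReal.ofReal (Real.exp (-(m * D z₁ x))) with hg₁
    set g₂ : EuclideanSpace ℝ (Fin d) → ENNReal :=
      fun x => ENNReal.ofReal (Real.exp (-(m * D z₂ x))) with hg₂
    have hmeas1 : Measurable fun x => g₁ x ^ a := (hmeas m z₁).pow_const a
    have hmeas2 : Measurable fun x => g₂ x ^ b := (hmeas m z₂).pow_const b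
    calc ∫⁻ x, ENNReal.ofReal (Real.exp (-(m * D zc x))) ∂ν
        = ∫⁻ x, ENNReal.ofReal (Real.exp (-(m * c)))
            * ((fun x => g₁ x ^ a) * fun x => g₂ x ^ b) x ∂ν := by
          apply lintegral_congr
          intro x
          rw [hpt x, ENNReal.ofReal_mul (Real.exp_pos _).le,
            ENNReal.ofReal_mul (by positivity)]
          simp only [hg₁, hg₂, Pi.mul_apply]
          rw [ENNReal.ofReal_rpow_of_pos (Real.exp_pos _),
            ENNReal.ofReal_rpow_of_pos (Real.exp_pos _)]
      _ = ENNReal.ofReal (Real.exp (-(m * c)))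
            * ∫⁻ x, ((fun x => g₁ x ^ a) * fun x => g₂ x ^ b) x ∂ν :=
          lintegral_const_mul _ (hmeas1.mul hmeas2)
      _ ≤ ENNReal.ofReal (Real.exp (-(m * c)))
            * ((∫⁻ x, (g₁ x ^ a) ^ (1 / a : ℝ) ∂ν) ^ (1 / (1 / a : ℝ))
              * (∫⁻ x, (g₂ x ^ b) ^ (1 / b : ℝ) ∂ν) ^ (1 / (1 / b : ℝ))) := by
          gcongr
          exact ENNReal.lintegral_mul_le_Lp_mul_Lq ν hpq hmeas1.aemeasurable
            hmeas2.aemeasurable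
      _ < ⊤ := by
          have e1 : ∀ x, (g₁ x ^ a) ^ (1 / a : ℝ) = g₁ x := by
            intro x
            rw [← ENNReal.rpow_mul, mul_one_div, div_self ha'.ne', ENNReal.rpow_one]
          have e2 : ∀ x, (g₂ x ^ b) ^ (1 / b : ℝ) = g₂ x := by
            intro x
            rw [← ENNReal.rpow_mul, mul_one_div, div_self hb'.ne', ENNReal.rpow_one]
          rw [lintegral_congr e1, lintegral_congr e2, one_div_one_div, one_div_one_div]
          exact ENNReal.mul_lt_top ENNReal.ofReal_lt_top
            (ENNReal.mul_lt_top (ENNReal.rpow_lt_top_of_nonneg ha hz₁.ne)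
              (ENNReal.rpow_lt_top_of_nonneg hb hz₂.ne))
  · -- monotone
    intro m n hm hmn z hz
    rw [hF] at hz ⊢
    simp only [Set.mem_setOf_eq] at hz ⊢
    refine lt_of_le_of_lt (lintegral_mono fun x => ?_) hz
    apply ENNReal.ofReal_le_ofReal
    apply Real.exp_le_exp.2
    have := hDnn z x
    nlinarith
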